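/- Let K ≥ 2 be an integer and N ≥ 1 a real number. Consider the optimization problem: maximize Σ_{k=2}^{K} n_k n_{k−1} + n_K over real variables n_1, …, n_K satisfying n_k ≥ 0 for all k and Σ_{k=1}^{K} n_k = N. Then (N+1)²/4 is the greatest value of the objective over the feasible set, and it is attained at the feasible point with n_k = 0 for all k ≤ K−2, n_{K−1} = (N−1)/2, and n_K = (N+1)/2. -/

import Mathlib

lemma qp_upper (K : ℕ) (hK : 2 ≤ K) (N : ℝ) (y : ℕ → ℝ)
    (hy0 : ∀ k ∈ Finset.Icc 1 K, 0 ≤ y k)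
    (hysum : (∑ k ∈ Finset.Icc 1 K, y k) = N) :
    (∑ k ∈ Finset.Icc 2 K, y k * y (k - 1)) + y K ≤ (N + 1) ^ 2 / 4 := by
  set SA := (Finset.Icc 1 K).filter (fun k => k % 2 = K % 2) with hSA
  set SB := (Finset.Icc 1 K).filter (fun k => ¬ k % 2 = K % 2) with hSB
  set A := ∑ k ∈ SA, y k with hA
  set B := ∑ k ∈ SB, y k with hB
  have hA0 : 0 ≤ A := Finset.sum_nonneg fun k hk => hy0 k (Finset.mem_filter.mp hk).1
  have hB0 : 0 ≤ B := Finset.sum_nonneg fun k hk => hy0 k (Finset.mem_filter.mp hk).1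
  have hAB : A + B = N := by
    rw [hA, hB, Finset.sum_filter_add_sum_filter_not, hysum]
  have hKSA : K ∈ SA := by
    simp [hSA, Finset.mem_filter, Finset.mem_Icc]; omega
  have hyK : y K ≤ A := Finset.single_le_sum
    (fun k hk => hy0 k (Finset.mem_filter.mp hk).1) hKSA
  -- the pairing function
  set f : ℕ → ℕ × ℕ := fun k => if k % 2 = K % 2 then (k, k-1) else (k-1, k) with hf
  have hinj : Set.InjOn f (Finset.Icc 2 K) := by
    intro a ha b hb hab
    simp only [Finset.coe_Icc, Set.mem_Icc] at ha hb
    simp only [hf] at hab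
    split_ifs at hab with h1 h2 h2 <;>
      simp only [Prod.mk.injEq] at hab <;> omega
  have hsub : (Finset.Icc 2 K).image f ⊆ SA ×ˢ SB := by
    intro p hp
    obtain ⟨k, hk, rfl⟩ := Finset.mem_image.mp hp
    simp only [Finset.mem_Icc] at hk
    simp only [hf]
    split_ifs with h <;>
      simp only [Finset.mem_product, hSA, hSB, Finset.mem_filter, Finset.mem_Icc] <;>
      omega
  have key : (∑ k ∈ Finset.Icc 2 K, y k * y (k-1)) ≤ A * B := by
    have h1 : (∑ k ∈ Finset.Icc 2 K, y k * y (k-1))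
        = ∑ p ∈ (Finset.Icc 2 K).image f, y p.1 * y p.2 := by
      rw [Finset.sum_image hinj]
      refine Finset.sum_congr rfl fun k hk => ?_
      simp only [hf]
      split_ifs <;> simp [mul_comm]
    have h2 : A * B = ∑ p ∈ SA ×ˢ SB, y p.1 * y p.2 := by
      rw [hA, hB, Finset.sum_mul_sum, Finset.sum_product]
    rw [h1, h2]
    refine Finset.sum_le_sum_of_subset_of_nonneg hsub fun p hp _ => ?_
    rw [Finset.mem_product] at hp
    exact mul_nonneg (hy0 _ (Finset.mem_filter.mp hp.1).1)
      (hy0 _ (Finset.mem_filter.mp hp.2).1)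
  nlinarith [sq_nonneg (A - B - 1)]


/-- For `K ≥ 2` and a real `N ≥ 1`, the greatest value of
`Σ_{k=2}^K n_k n_{k-1} + n_K` over nonnegative reals `n_1, …, n_K` summing to `N`
is `(N+1)^2/4`, attained at `n_k = 0` for `k ≤ K-2`, `n_{K-1} = (N-1)/2`, `n_K = (N+1)/2`. -/
theorem qp_max_real (K : ℕ) (hK : 2 ≤ K) (N : ℝ) (hN : 1 ≤ N)
    (x : ℕ → ℝ)
    (hxdef : ∀ k, x k = if k = K then (N + 1) / 2 else if k = K - 1 then (N - 1) / 2 else 0) :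
    IsGreatest
      {v : ℝ | ∃ y : ℕ → ℝ, (∀ k ∈ Finset.Icc 1 K, 0 ≤ y k) ∧
        (∑ k ∈ Finset.Icc 1 K, y k) = N ∧
        v = (∑ k ∈ Finset.Icc 2 K, y k * y (k - 1)) + y K}
      ((N + 1) ^ 2 / 4) ∧
    (∀ k ∈ Finset.Icc 1 K, 0 ≤ x k) ∧
    (∑ k ∈ Finset.Icc 1 K, x k) = N ∧
    (∑ k ∈ Finset.Icc 2 K, x k * x (k - 1)) + x K = (N + 1) ^ 2 / 4 := by
  have hx0 : ∀ k ∈ Finset.Icc 1 K, 0 ≤ x k := by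
    intro k _
    rw [hxdef k]
    split_ifs <;> linarith
  have hxsum : (∑ k ∈ Finset.Icc 1 K, x k) = N := by
    have : ∀ k ∈ Finset.Icc 1 K, x k =
        (if k = K then (N + 1) / 2 else 0) + (if k = K - 1 then (N - 1) / 2 else 0) := by
      intro k _
      rw [hxdef k]
      split_ifs with h1 h2 <;> first | (exfalso; omega) | ring
    rw [Finset.sum_congr rfl this, Finset.sum_add_distrib,
      Finset.sum_ite_eq' _ K, Finset.sum_ite_eq' _ (K - 1)]
    have h1 : K ∈ Finset.Icc 1 K := by simp; omega
    have h2 : K - 1 ∈ Finset.Icc 1 K := by simp [Finset.mem_Icc]; omega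
    rw [if_pos h1, if_pos h2]
    ring
  have hxobj : (∑ k ∈ Finset.Icc 2 K, x k * x (k - 1)) + x K = (N + 1) ^ 2 / 4 := by
    have hterm : ∀ k ∈ Finset.Icc 2 K, x k * x (k - 1) =
        if k = K then (N + 1) / 2 * ((N - 1) / 2) else 0 := by
      intro k hk
      simp only [Finset.mem_Icc] at hk
      rcases eq_or_ne k K with rfl | hne
      · rw [if_pos rfl, hxdef k, hxdef (k - 1), if_pos rfl, if_neg (by omega), if_pos rfl]
      · rw [if_neg hne, hxdef k, if_neg hne]
        rcases eq_or_ne k (K - 1) with hk2 | hne2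
        · rw [if_pos hk2, hxdef (k - 1), if_neg (by omega), if_neg (by omega)]
          ring
        · rw [if_neg hne2, zero_mul]
    rw [Finset.sum_congr rfl hterm, Finset.sum_ite_eq' _ K,
      if_pos (by simp [Finset.mem_Icc]; omega : K ∈ Finset.Icc 2 K), hxdef K, if_pos rfl]
    ring
  refine ⟨⟨⟨x, hx0, hxsum, hxobj.symm⟩, ?_⟩, hx0, hxsum, hxobj⟩
  rintro v ⟨y, hy0, hysum, rfl⟩
  exact qp_upper K hK N y hy0 hysum
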